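/- For every integer N ≥ 1, every m ≥ 1, and every permutation α of {1,…,m}, the standard-representation so(N) weight of the inverse permutation satisfies W_N(α⁻¹) = (−1)^m · W_N(α). -/

import Mathlib

open Matrix

/-- The standard generators `X_{ij} = E_{ij} - E_{N+1-j, N+1-i}` of `so(N)`,
as `N × N` matrices over `ℚ` (indices zero-based, so `N+1-i` becomes `Fin.rev i`). -/
noncomputable def soGen (N : ℕ) (i j : Fin N) : Matrix (Fin N) (Fin N) ℚ :=
  Matrix.single i j 1 - Matrix.single j.rev i.rev 1

/-- `W_N(α) = Tr (Σ_{i₁,…,i_m} X_{i₁ i_{α(1)}} ⋯ X_{i_m i_{α(m)}})`,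
the (un-normalized) standard-representation so(N) weight of a permutation
`α` of `{1,…,m}`; the product is taken in order of increasing position. -/
noncomputable def soWeight (N m : ℕ) (α : Equiv.Perm (Fin m)) : ℚ :=
  Matrix.trace (∑ i : Fin m → Fin N,
    ((List.finRange m).map fun k => soGen N (i k) (i (α k))).prod)

lemma soGen_rev (N : ℕ) (i j : Fin N) : soGen N j.rev i.rev = - soGen N i j := by
  simp [soGen, Fin.rev_rev, neg_sub]

lemma prod_map_neg {α R : Type*} [Ring R] [Algebra ℚ R] (l : List α) (f : α → R) :
    (l.map fun a => -f a).prod = (-1 : ℚ) ^ l.length • (l.map f).prod := by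
  induction l with
  | nil => simp
  | cons a t ih =>
    simp only [List.map_cons, List.prod_cons, List.length_cons, ih, pow_succ]
    rw [mul_smul_comm, neg_mul, smul_neg, mul_neg, mul_one, neg_smul]

/-- `W_N(α⁻¹) = (-1)^m ⬝ W_N(α)` for any permutation `α` of `{1,…,m}`. -/
theorem soWeight_inv (N m : ℕ) (hN : 1 ≤ N) (hm : 1 ≤ m)
    (α : Equiv.Perm (Fin m)) :
    soWeight N m α⁻¹ = (-1 : ℚ) ^ m * soWeight N m α := by
  unfold soWeight
  have key : ∀ j : Fin m → Fin N,
      ((List.finRange m).map fun k => soGen N (j k) (j (α⁻¹ k))).prod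
      = (-1 : ℚ) ^ m • ((List.finRange m).map fun k =>
          soGen N (Fin.rev (j (α⁻¹ k))) (Fin.rev (j k))).prod := by
    intro j
    have h1 : ((List.finRange m).map fun k => soGen N (j k) (j (α⁻¹ k))).prod
        = ((List.finRange m).map fun k =>
            -(soGen N (Fin.rev (j (α⁻¹ k))) (Fin.rev (j k)))).prod := by
      congr 1
      apply List.map_congr_left
      intro k _
      rw [soGen_rev, neg_neg]
    rw [h1, prod_map_neg, List.length_finRange]
  have hsum : (∑ j : Fin m → Fin N,
      ((List.finRange m).map fun k => soGen N (j k) (j (α⁻¹ k))).prod)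
      = (-1 : ℚ) ^ m • ∑ j : Fin m → Fin N,
        ((List.finRange m).map fun k =>
          soGen N (Fin.rev (j (α⁻¹ k))) (Fin.rev (j k))).prod := by
    rw [Finset.smul_sum]
    exact Finset.sum_congr rfl fun j _ => key j
  rw [hsum, Matrix.trace_smul, smul_eq_mul]
  congr 1
  congr 1
  -- reindex the sum by the bijection j ↦ Fin.rev ∘ j ∘ α⁻¹
  apply Fintype.sum_equiv (Equiv.arrowCongr (α : Equiv.Perm (Fin m)) Fin.revPerm)
  intro j
  congr 1
  apply List.map_congr_left
  intro k _
  simp [Equiv.arrowCongr, Fin.revPerm, Equiv.Perm.inv_def]
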